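/- Let S be a Noetherian ring that is finite and flat as a Z-module (resp. Z_ℓ-module), and assume S is Gorenstein of Krull dimension 1. Then for a finitely generated S-module M, the following are equivalent: (1) M is reflexive (the natural map M → Hom_S(Hom_S(M,S),S) is an isomorphism); (2) M is torsionless (that map is injective); (3) M is free as a Z-module (resp. Z_ℓ-module). -/

import Mathlib

open CategoryTheory

/-- `S` has injective dimension `≤ 1` as a module over itself: there is an
exact sequence `0 → S → I₀ → I₁ → 0` with `I₀`, `I₁` injective `S`-modules.
For a Noetherian ring of Krull dimension `1` this is the Gorenstein
condition. -/
def IsGorensteinOfDimOne (S : Type) [CommRing S] : Prop :=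
  ∃ (I₀ I₁ : ModuleCat S) (f : ModuleCat.of S S ⟶ I₀) (g : I₀ ⟶ I₁),
    Injective I₀ ∧ Injective I₁ ∧
    Function.Injective f ∧ Function.Surjective g ∧
    LinearMap.range f.hom = LinearMap.ker g.hom

section Aux

open Module Submodule

variable {S : Type} [CommRing S]

/-- The key extension lemma: if `S` has injective dimension `≤ 1` and
`A ≤ B` with `B ⧸ A` embedding into a projective module, then every
functional on `A` extends to `B`. -/
lemma IsGorensteinOfDimOne.extension (hGor : IsGorensteinOfDimOne S)
    {B L : Type} [AddCommGroup B] [Module S B] [AddCommGroup L] [Module S L]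
    [Module.Projective S L] (A : Submodule S B)
    (e : (B ⧸ A) →ₗ[S] L) (he : Function.Injective e) (h : A →ₗ[S] S) :
    ∃ H : B →ₗ[S] S, ∀ a : A, H a = h a := by
  obtain ⟨I₀, I₁, ι, g, hI₀, hI₁, hι, hg, hex⟩ := hGor
  let ι' : S →ₗ[S] I₀ := ι.hom
  let g' : I₀ →ₗ[S] I₁ := g.hom
  have inj₀ : Module.Injective S I₀ :=
    Module.injective_module_of_injective_object S I₀ (inj := hI₀)
  have inj₁ : Module.Injective S I₁ :=
    Module.injective_module_of_injective_object S I₁ (inj := hI₁)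
  obtain ⟨Hi, hHi⟩ := inj₀.out A.subtype A.injective_subtype (ι' ∘ₗ h)
  have hkill : ∀ a ∈ A, (g' ∘ₗ Hi) a = 0 := by
    intro a ha
    have h1 : Hi a = ι' (h ⟨a, ha⟩) := hHi ⟨a, ha⟩
    have h2 : ι' (h ⟨a, ha⟩) ∈ LinearMap.ker g' := by
      rw [← hex]; exact LinearMap.mem_range_self _ _
    simp only [LinearMap.comp_apply, h1]
    exact LinearMap.mem_ker.mp h2
  let q : (B ⧸ A) →ₗ[S] I₁ :=
    A.liftQ (g' ∘ₗ Hi) (fun a ha => LinearMap.mem_ker.mpr (hkill a ha))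
  obtain ⟨G, hG⟩ := inj₁.out e he q
  obtain ⟨G', hG'⟩ := Module.projective_lifting_property g' G hg
  set H₁ : B →ₗ[S] I₀ := Hi - G' ∘ₗ (e ∘ₗ A.mkQ) with hH₁
  have hker : ∀ b, H₁ b ∈ LinearMap.range ι' := by
    intro b
    rw [hex]
    have h1 : g' (G' (e (A.mkQ b))) = G (e (A.mkQ b)) := by
      rw [← LinearMap.comp_apply, hG']
    have h2 : G (e (A.mkQ b)) = q (A.mkQ b) := hG (A.mkQ b)
    have h3 : q (A.mkQ b) = g' (Hi b) := by
      simp only [q, Submodule.mkQ_apply, Submodule.liftQ_apply, LinearMap.comp_apply]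
    simp only [hH₁, LinearMap.sub_apply, LinearMap.comp_apply, LinearMap.mem_ker, map_sub]
    rw [h1, h2, h3, sub_self]
  let eι := LinearEquiv.ofInjective ι' hι
  refine ⟨eι.symm.toLinearMap ∘ₗ H₁.codRestrict (LinearMap.range ι') hker, fun a => ?_⟩
  have hmk : A.mkQ a = 0 := (Submodule.Quotient.mk_eq_zero A).mpr a.2
  have hval : H₁ a = ι' (h a) := by
    simp only [hH₁, LinearMap.sub_apply, LinearMap.comp_apply, hmk, map_zero, sub_zero]
    exact hHi a
  have hcr : H₁.codRestrict (LinearMap.range ι') hker a = eι (h a) := by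
    apply Subtype.ext
    simp only [LinearMap.codRestrict_apply, hval]
    rfl
  simp only [LinearMap.comp_apply, LinearEquiv.coe_coe, hcr, LinearEquiv.symm_apply_apply]

lemma dualMap_injective_of_surjective {M N : Type} [AddCommGroup M] [Module S M]
    [AddCommGroup N] [Module S N] {p : M →ₗ[S] N} (hp : Function.Surjective p) :
    Function.Injective p.dualMap := by
  intro f₁ f₂ hf
  ext m
  obtain ⟨x, rfl⟩ := hp m
  have := DFunLike.congr_fun hf x
  simpa using this

/-- Surjectivity of the evaluation map for finitely generated modules over a
Noetherian ring with self-injective dimension `≤ 1`. -/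
lemma eval_surjective [IsNoetherianRing S] (hGor : IsGorensteinOfDimOne S)
    (M : Type) [AddCommGroup M] [Module S M] [Module.Finite S M] :
    Function.Surjective (Module.Dual.eval S M) := by
  classical
  obtain ⟨n, p, hp⟩ := Module.Finite.exists_fin' S M
  have hker : (LinearMap.ker p).FG := IsNoetherian.noetherian _
  obtain ⟨t, ht⟩ := hker
  let v : ↥t → (Fin n → S) := fun i => (i : Fin n → S)
  let d : (↥t → S) →ₗ[S] (Fin n → S) := Fintype.linearCombination S v
  have hd : LinearMap.range d = LinearMap.ker p := by
    rw [Fintype.range_linearCombination]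
    rw [show Set.range v = (t : Set (Fin n → S)) from Subtype.range_coe, ht]
  have hpdual_inj : Function.Injective p.dualMap := dualMap_injective_of_surjective hp
  set A := LinearMap.range p.dualMap with hA
  have hAker : A = LinearMap.ker d.dualMap := by
    ext f
    constructor
    · rintro ⟨φ, rfl⟩
      rw [LinearMap.mem_ker]
      refine LinearMap.ext fun x => ?_
      have hdx : d x ∈ LinearMap.ker p := hd ▸ LinearMap.mem_range_self d x
      simp only [LinearMap.dualMap_apply, LinearMap.comp_apply, LinearMap.zero_apply]
      rw [LinearMap.mem_ker.mp hdx, map_zero]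
    · intro hf
      have hle : LinearMap.ker p ≤ LinearMap.ker f := by
        rw [← hd]
        rintro x ⟨y, rfl⟩
        have := DFunLike.congr_fun (LinearMap.mem_ker.mp hf) y
        simpa using this
      let f₀ := (LinearMap.ker p).liftQ f hle
      let e' := p.quotKerEquivOfSurjective hp
      refine ⟨f₀ ∘ₗ e'.symm.toLinearMap, ?_⟩
      refine LinearMap.ext fun x => ?_
      simp only [LinearMap.dualMap_apply, LinearMap.comp_apply, LinearEquiv.coe_coe]
      have hx : e'.symm (p x) = Submodule.Quotient.mk x := by
        apply e'.injective
        rw [LinearEquiv.apply_symm_apply]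
        rfl
      rw [hx]
      simp [f₀]
  let qmap : ((Module.Dual S (Fin n → S)) ⧸ A) →ₗ[S] Module.Dual S (↥t → S) :=
    A.liftQ d.dualMap (le_of_eq hAker)
  have hqinj : Function.Injective qmap :=
    LinearMap.ker_eq_bot.mp (Submodule.ker_liftQ_eq_bot A _ _ (le_of_eq hAker.symm))
  haveI : Module.Free S (Module.Dual S (↥t → S)) :=
    Module.Free.of_basis ((Pi.basisFun S ↥t).dualBasis)
  intro φ
  let edual := LinearEquiv.ofInjective p.dualMap hpdual_inj
  let h : ↥A →ₗ[S] S := φ ∘ₗ edual.symm.toLinearMap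
  obtain ⟨H, hH⟩ := hGor.extension A qmap hqinj h
  obtain ⟨x, hx⟩ := (Module.bijective_dual_eval S (Fin n → S)).surjective H
  refine ⟨p x, ?_⟩
  refine LinearMap.ext fun f => ?_
  have hmem : p.dualMap f ∈ A := LinearMap.mem_range_self _ f
  have h1 : H (p.dualMap f) = h ⟨p.dualMap f, hmem⟩ := hH ⟨p.dualMap f, hmem⟩
  have h2 : edual f = ⟨p.dualMap f, hmem⟩ := Subtype.ext rfl
  have h3 : h ⟨p.dualMap f, hmem⟩ = φ f := by
    simp only [h, LinearMap.comp_apply, LinearEquiv.coe_coe, ← h2,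
      LinearEquiv.symm_apply_apply]
  calc Module.Dual.eval S M (p x) f = f (p x) := rfl
    _ = (p.dualMap f) x := rfl
    _ = Module.Dual.eval S (Fin n → S) x (p.dualMap f) := rfl
    _ = H (p.dualMap f) := by rw [hx]
    _ = φ f := by rw [h1, h3]

/-- In a commutative artinian (and noetherian) ring, every maximal ideal has a
nonzero annihilator. -/
lemma artinian_max_ann (A : Type) [CommRing A] [IsArtinianRing A] [IsNoetherianRing A]
    (m : Ideal A) (hm : m.IsMaximal) :
    ∃ x : A, x ≠ 0 ∧ ∀ y ∈ m, y * x = 0 := by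
  classical
  obtain ⟨n, hn⟩ := IsArtinian.monotone_stabilizes (R := A) (M := A)
    ⟨fun k => OrderDual.toDual (m ^ k : Ideal A),
     fun k l hkl => Ideal.pow_le_pow_right hkl⟩
  have hstab : (m ^ (n + 1) : Ideal A) = m ^ n := (hn (n + 1) (Nat.le_succ n)).symm
  have hfg : (m ^ n : Ideal A).FG := IsNoetherian.noetherian _
  obtain ⟨r, hr1, hr0⟩ :=
    Submodule.exists_sub_one_mem_and_smul_eq_zero_of_fg_of_le_smul m (m ^ n) hfg
      (by rw [Ideal.smul_eq_mul, ← pow_succ']; exact le_of_eq hstab.symm)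
  have hrne : r ≠ 0 := by
    intro h
    subst h
    apply hm.ne_top
    rw [Ideal.eq_top_iff_one]
    simpa using m.neg_mem hr1
  have hex : ∃ k, ∀ a ∈ (m ^ k : Ideal A), a * r = 0 :=
    ⟨n, fun a ha => by rw [mul_comm]; simpa [smul_eq_mul] using hr0 a ha⟩
  have ht : ∀ a ∈ (m ^ Nat.find hex : Ideal A), a * r = 0 := Nat.find_spec hex
  have ht0 : Nat.find hex ≠ 0 := by
    intro h
    apply hrne
    have := ht 1 (by rw [h, pow_zero, Ideal.one_eq_top]; trivial)
    simpa using this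
  obtain ⟨t', htt⟩ := Nat.exists_eq_succ_of_ne_zero ht0
  have hlt : ¬ ∀ a ∈ (m ^ t' : Ideal A), a * r = 0 :=
    Nat.find_min hex (by omega)
  push_neg at hlt
  obtain ⟨a, ha, har⟩ := hlt
  refine ⟨a * r, har, fun y hy => ?_⟩
  have hya : y * a ∈ (m ^ (t' + 1) : Ideal A) := by
    rw [pow_succ']
    exact Ideal.mul_mem_mul hy ha
  rw [← mul_assoc]
  exact ht _ (by rwa [htt])

set_option maxHeartbeats 2000000 in
/-- A nonzero finitely generated `S`-module which is torsion-free over `Λ`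
admits a nonzero `S`-linear functional. -/
lemma exists_dual_ne_zero
    (Λ : Type) [CommRing Λ] [IsDomain Λ]
    [Algebra Λ S] [Module.Finite Λ S]
    (hStf : ∀ (c : Λ) (s : S), c • s = 0 → c = 0 ∨ s = 0)
    (N : Type) [AddCommGroup N] [Module S N] [Module Λ N] [IsScalarTower Λ S N]
    [Module.Finite S N]
    (htf : ∀ (c : Λ) (x : N), c • x = 0 → c = 0 ∨ x = 0)
    (x₀ : N) (hx₀ : x₀ ≠ 0) :
    ∃ f : N →ₗ[S] S, f ≠ 0 := by
  classical
  set M₀ : Submonoid S := (nonZeroDivisors Λ).map (algebraMap Λ S) with hM₀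
  let A := Localization M₀
  let NL := LocalizedModule M₀ N
  have hM₀mem : ∀ m : M₀, ∃ c ∈ nonZeroDivisors Λ, algebraMap Λ S c = (m : S) := by
    intro m
    exact Submonoid.mem_map.mp m.2
  have hM₀S : M₀ ≤ nonZeroDivisors S := by
    intro s hs
    obtain ⟨c, hc, hcs⟩ := hM₀mem ⟨s, hs⟩
    refine mem_nonZeroDivisors_iff_right.mpr ?_
    intro z hz
    have hz' : c • z = 0 := by
      rw [Algebra.smul_def, hcs, mul_comm]
      exact hz
    rcases hStf c z hz' with h | h
    · exact absurd h (nonZeroDivisors.ne_zero hc)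
    · exact h
  have hx₀L : LocalizedModule.mk x₀ (1 : M₀) ≠ (0 : NL) := by
    intro h0
    rw [show (0 : NL) = LocalizedModule.mk 0 1 from (LocalizedModule.zero_mk 1).symm, LocalizedModule.mk_eq] at h0
    obtain ⟨u, hu⟩ := h0
    simp only [one_smul, smul_zero] at hu
    obtain ⟨c, hc, hcu⟩ := hM₀mem u
    have hcx : c • x₀ = 0 := by
      rw [← algebraMap_smul S c x₀, hcu]
      rw [← Submonoid.smul_def]
      exact hu
    rcases htf c x₀ hcx with h | h
    · exact nonZeroDivisors.ne_zero hc h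
    · exact hx₀ h
  haveI : Module.Finite A NL :=
    Module.Finite.of_isLocalizedModule M₀ (LocalizedModule.mkLinearMap M₀ N)
  -- `A` is a finite algebra over the fraction field `K` of `Λ`.
  let K := FractionRing Λ
  have hmaple : nonZeroDivisors Λ ≤ Submonoid.comap (algebraMap Λ S) M₀ :=
    fun c hc => Submonoid.mem_map_of_mem _ hc
  let φK : K →+* A := IsLocalization.map (M := nonZeroDivisors Λ) (T := M₀) A
    (algebraMap Λ S) hmaple
  letI : Algebra K A := φK.toAlgebra
  have halgKA : (algebraMap K A) = φK := rfl
  have hcomm : ∀ c : Λ, algebraMap K A (algebraMap Λ K c) = algebraMap S A (algebraMap Λ S c) := by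
    intro c
    rw [halgKA]
    have := IsLocalization.map_comp (M := nonZeroDivisors Λ) (T := M₀) (S := K) (Q := A) hmaple
    exact DFunLike.congr_fun this c
  haveI hKA : Module.Finite K A := by
    obtain ⟨G, hG⟩ := Module.finite_def.mp (inferInstance : Module.Finite Λ S)
    constructor
    refine Submodule.fg_def.mpr ⟨(algebraMap S A) '' (G : Set S), (Set.Finite.image _ G.finite_toSet), ?_⟩
    rw [eq_top_iff]
    have halg : ∀ s : S, algebraMap S A s ∈ Submodule.span K ((algebraMap S A) '' (G : Set S)) := by
      intro s
      have hs : s ∈ Submodule.span Λ (G : Set S) := by rw [hG]; trivial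
      induction hs using Submodule.span_induction with
      | mem x hx => exact Submodule.subset_span (Set.mem_image_of_mem _ hx)
      | zero => simp
      | add x y _ _ hx hy => rw [map_add]; exact Submodule.add_mem _ hx hy
      | smul c x _ hx =>
        have heq : algebraMap S A (c • x) = (algebraMap Λ K c) • (algebraMap S A x) := by
          rw [Algebra.smul_def (A := S), map_mul, Algebra.smul_def, hcomm]
        rw [heq]
        exact Submodule.smul_mem _ _ hx
    intro a _
    obtain ⟨⟨s, m⟩, rfl⟩ := IsLocalization.mk'_surjective M₀ a
    obtain ⟨c, hc, hcm⟩ := hM₀mem m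
    have hmk : IsLocalization.mk' A s m =
        (IsLocalization.mk' K (1 : Λ) ⟨c, hc⟩) • (algebraMap S A s) := by
      rw [Algebra.smul_def, halgKA, IsLocalization.map_mk' (M := nonZeroDivisors Λ)]
      rw [IsLocalization.mk'_eq_mul_mk'_one (M := M₀) s m, mul_comm]
      have hmeq : m = (⟨algebraMap Λ S c, hmaple hc⟩ : M₀) := Subtype.ext hcm.symm
      rw [map_one, hmeq]
    show IsLocalization.mk' A s m ∈ _
    rw [hmk]
    exact Submodule.smul_mem _ _ (halg s)
  haveI : IsArtinianRing A := isArtinian_of_tower K (inferInstance : IsArtinian K A)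
  haveI : IsNoetherianRing A := isNoetherian_of_tower K (inferInstance : IsNoetherian K A)
  haveI : Nontrivial NL := nontrivial_of_ne _ _ hx₀L
  -- find a coatom in the submodule lattice of `NL`
  obtain ⟨P, hPne, hPmax⟩ :=
    (set_has_maximal_iff_noetherian.mpr (inferInstance : IsNoetherian A NL))
      {P : Submodule A NL | P ≠ ⊤} ⟨⊥, bot_ne_top⟩
  have hPco : IsCoatom P := ⟨hPne, fun Q hQ => by
    by_contra hQ'
    exact hPmax Q hQ' hQ⟩
  haveI hsimple : IsSimpleModule A (NL ⧸ P) := isSimpleModule_iff_isCoatom.mpr hPco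
  haveI : Nontrivial (NL ⧸ P) := IsSimpleModule.nontrivial A (NL ⧸ P)
  obtain ⟨qq, hq⟩ := exists_ne (0 : NL ⧸ P)
  have hmmax : Ideal.IsMaximal (LinearMap.ker (LinearMap.toSpanSingleton A (NL ⧸ P) qq)) :=
    IsSimpleModule.ker_toSpanSingleton_isMaximal A hq
  obtain ⟨x, hxne, hxann⟩ := artinian_max_ann A _ hmmax
  have hspan : Function.Surjective (LinearMap.toSpanSingleton A (NL ⧸ P) qq) :=
    IsSimpleModule.toSpanSingleton_surjective A hq
  let e5 := LinearMap.quotKerEquivOfSurjective _ hspan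
  let σ0 : (A ⧸ LinearMap.ker (LinearMap.toSpanSingleton A (NL ⧸ P) qq)) →ₗ[A] A :=
    (LinearMap.ker (LinearMap.toSpanSingleton A (NL ⧸ P) qq)).liftQ
      (LinearMap.toSpanSingleton A A x)
      (fun y hy => by
        rw [LinearMap.mem_ker, LinearMap.toSpanSingleton_apply, smul_eq_mul]
        exact hxann y hy)
  let σ : (NL ⧸ P) →ₗ[A] A := σ0 ∘ₗ e5.symm.toLinearMap
  have hσq : σ qq = x := by
    have h1 : e5 (Submodule.Quotient.mk 1) = qq := by
      show LinearMap.toSpanSingleton A (NL ⧸ P) qq 1 = qq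
      rw [LinearMap.toSpanSingleton_apply, one_smul]
    have h2 : e5.symm qq = Submodule.Quotient.mk 1 := by
      apply e5.injective
      rw [LinearEquiv.apply_symm_apply, h1]
    show σ0 (e5.symm qq) = x
    rw [h2]
    show LinearMap.toSpanSingleton A A x 1 = x
    rw [LinearMap.toSpanSingleton_apply, one_smul]
  let φ : NL →ₗ[A] A := σ ∘ₗ P.mkQ
  let ψ0 : N →ₗ[S] A := (φ.restrictScalars S) ∘ₗ LocalizedModule.mkLinearMap M₀ N
  obtain ⟨y, hy⟩ : ∃ y : NL, φ y ≠ 0 := by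
    obtain ⟨z, hz⟩ := Submodule.Quotient.mk_surjective P qq
    refine ⟨z, ?_⟩
    show σ (P.mkQ z) ≠ 0
    rw [show P.mkQ z = qq from hz, hσq]
    exact hxne
  obtain ⟨n₁, s₁, hys⟩ : ∃ (n₁ : N) (s₁ : M₀), LocalizedModule.mk n₁ s₁ = y := by
    induction y using LocalizedModule.induction_on with
    | h n s => exact ⟨n, s, rfl⟩
  have hψ0 : ψ0 n₁ ≠ 0 := by
    have hmk1 : (algebraMap S A (s₁ : S)) • y = LocalizedModule.mk n₁ 1 := by
      rw [← hys, ← Localization.mk_one_eq_algebraMap, LocalizedModule.mk_smul_mk,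
        one_mul, ← Submonoid.smul_def, LocalizedModule.mk_cancel]
    have hψeq : ψ0 n₁ = (algebraMap S A (s₁ : S)) * φ y := by
      show φ (LocalizedModule.mk n₁ 1) = _
      rw [← hmk1, map_smul, smul_eq_mul]
    rw [hψeq]
    intro hcontra
    exact hy ((IsUnit.mul_right_eq_zero (IsLocalization.map_units A s₁)).mp hcontra)
  obtain ⟨G₂, hG₂⟩ := Module.finite_def.mp (inferInstance : Module.Finite S N)
  obtain ⟨b, hb⟩ := IsLocalization.exist_integer_multiples_of_finset M₀ (G₂.image ψ0)
  let ψ1 : N →ₗ[S] A := (b : S) • ψ0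
  have hrange : ∀ z : N, ψ1 z ∈ LinearMap.range (Algebra.linearMap S A) := by
    have hle : (⊤ : Submodule S N) ≤
        Submodule.comap ψ1 (LinearMap.range (Algebra.linearMap S A)) := by
      rw [← hG₂]
      apply Submodule.span_le.mpr
      intro z hz
      obtain ⟨s', hs'⟩ := hb (ψ0 z) (Finset.mem_image_of_mem _ hz)
      refine Submodule.mem_comap.mpr ⟨s', ?_⟩
      rw [Algebra.linearMap_apply, hs']
      show (b : S) • ψ0 z = ψ1 z
      rfl
    exact fun z => hle trivial
  have hψ1 : ψ1 n₁ ≠ 0 := by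
    show (b : S) • ψ0 n₁ ≠ 0
    rw [Algebra.smul_def]
    intro hcontra
    exact hψ0 ((IsUnit.mul_right_eq_zero (IsLocalization.map_units A b)).mp hcontra)
  have hinj : Function.Injective (Algebra.linearMap S A) :=
    IsLocalization.injective A hM₀S
  let e6 := LinearEquiv.ofInjective (Algebra.linearMap S A) hinj
  refine ⟨e6.symm.toLinearMap ∘ₗ ψ1.codRestrict _ hrange, ?_⟩
  intro h0
  apply hψ1
  have h1 : e6.symm (ψ1.codRestrict _ hrange n₁) = 0 := by
    have := DFunLike.congr_fun h0 n₁
    exact this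
  have h2 : ψ1.codRestrict _ hrange n₁ = 0 := by
    apply e6.symm.injective
    rw [h1, map_zero]
  exact congrArg Subtype.val h2

/-- Flatness over a domain gives torsion-freeness. -/
lemma flat_torsion_free (Λ : Type) [CommRing Λ] [IsDomain Λ] [Algebra Λ S]
    [Module.Flat Λ S] :
    ∀ (c : Λ) (s : S), c • s = 0 → c = 0 ∨ s = 0 := by
  intro c s hcs
  by_cases hc : c = 0
  · exact Or.inl hc
  right
  have hreg : IsSMulRegular Λ c := fun a b hab => by
    have : c * a = c * b := by simpa [smul_eq_mul] using hab
    exact mul_left_cancel₀ hc this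
  have h2 : IsSMulRegular (TensorProduct Λ S Λ) c := hreg.lTensor S
  have h3 : IsSMulRegular S c := by
    intro a b hab
    have hab2 : c • a = c • b := hab
    have hab' : c • ((TensorProduct.rid Λ S).symm a) = c • ((TensorProduct.rid Λ S).symm b) := by
      rw [← map_smul, ← map_smul, hab2]
    exact (TensorProduct.rid Λ S).symm.injective (h2 hab')
  apply h3
  show c • s = c • 0
  rw [hcs, smul_zero]

/-- Injectivity of the evaluation map for a finitely generated `S`-module which
is torsion-free over `Λ`. -/
lemma eval_injective [IsNoetherianRing S] (hGor : IsGorensteinOfDimOne S)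
    (Λ : Type) [CommRing Λ] [IsDomain Λ] [Algebra Λ S] [Module.Finite Λ S]
    (hStf : ∀ (c : Λ) (s : S), c • s = 0 → c = 0 ∨ s = 0)
    (M : Type) [AddCommGroup M] [Module S M] [Module Λ M] [IsScalarTower Λ S M]
    [Module.Finite S M]
    (htf : ∀ (c : Λ) (m : M), c • m = 0 → c = 0 ∨ m = 0) :
    Function.Injective (Module.Dual.eval S M) := by
  classical
  rw [← LinearMap.ker_eq_bot]
  by_contra hT
  set T := LinearMap.ker (Module.Dual.eval S M) with hTdef
  -- the dual module is finitely generated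
  obtain ⟨n, p, hp⟩ := Module.Finite.exists_fin' S M
  haveI : Module.Finite S (Module.Dual S (Fin n → S)) :=
    Module.Finite.of_basis ((Pi.basisFun S (Fin n)).dualBasis)
  haveI hDfin : Module.Finite S (Module.Dual S M) := by
    haveI := isNoetherian_of_injective p.dualMap (dualMap_injective_of_surjective hp)
    exact Module.finite_def.mpr (IsNoetherian.noetherian ⊤)
  obtain ⟨k, v, hv⟩ := Module.Finite.exists_fin (R := S) (M := Module.Dual S M)
  let Φ : M →ₗ[S] (Fin k → S) := LinearMap.pi (fun i => v i)
  have hΦker : LinearMap.ker Φ = T := by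
    ext m
    constructor
    · intro hm
      rw [hTdef, LinearMap.mem_ker]
      ext f
      show f m = 0
      have hf : f ∈ Submodule.span S (Set.range v) := by rw [hv]; trivial
      induction hf using Submodule.span_induction with
      | mem g hg =>
        obtain ⟨i, rfl⟩ := hg
        simpa [Φ] using congrFun (LinearMap.mem_ker.mp hm) i
      | zero => rfl
      | add g₁ g₂ _ _ hg₁ hg₂ => simp [LinearMap.add_apply, hg₁, hg₂]
      | smul c g _ hg => simp [LinearMap.smul_apply, hg]
    · intro hm
      rw [LinearMap.mem_ker]
      ext i
      have := DFunLike.congr_fun (LinearMap.mem_ker.mp hm) (v i)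
      simpa [Φ] using this
  let e3 : (M ⧸ T) →ₗ[S] (Fin k → S) := T.liftQ Φ (le_of_eq hΦker.symm)
  have he3 : Function.Injective e3 :=
    LinearMap.ker_eq_bot.mp (Submodule.ker_liftQ_eq_bot _ _ _ (le_of_eq hΦker))
  obtain ⟨x₀, hx₀T, hx₀⟩ := (Submodule.ne_bot_iff T).mp hT
  haveI : Module.Finite S ↥T := Module.Finite.iff_fg.mpr (IsNoetherian.noetherian T)
  have htfT : ∀ (c : Λ) (x : ↥T), c • x = 0 → c = 0 ∨ x = 0 := by
    intro c x hcx
    have hcx' : c • (x : M) = 0 := by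
      have := congrArg (Subtype.val) hcx
      simpa using this
    rcases htf c x hcx' with h | h
    · exact Or.inl h
    · exact Or.inr (Subtype.ext h)
  obtain ⟨f, hf⟩ := exists_dual_ne_zero Λ hStf ↥T htfT ⟨x₀, hx₀T⟩
    (fun h => hx₀ (congrArg Subtype.val h))
  obtain ⟨H, hH⟩ := hGor.extension T e3 he3 f
  apply hf
  ext x
  have h1 : H x = f x := hH x
  have h2 : H (x : M) = 0 := by
    have h3 : Module.Dual.eval S M (x : M) = 0 := x.2
    have h4 : Module.Dual.eval S M (x : M) H = 0 := by rw [h3]; rfl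
    rwa [Module.Dual.eval_apply] at h4
  rw [LinearMap.zero_apply, ← h1, h2]

end Aux

/-- Let `Λ` be `ℤ` or `ℤ_ℓ` (formalized: a principal ideal
domain) and `S` a Noetherian `Λ`-algebra, finite and flat over `Λ`, which is
Gorenstein of Krull dimension `1`. For a finitely generated `S`-module `M`
the following are equivalent: `M` is reflexive; `M` is torsionless; `M` is
free as a `Λ`-module. -/
theorem reflexive_tfae
    (Λ : Type) [CommRing Λ] [IsDomain Λ] [IsPrincipalIdealRing Λ]
    (S : Type) [CommRing S] [IsNoetherianRing S] [Algebra Λ S]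
    [Module.Finite Λ S] [Module.Flat Λ S]
    (hdim : ringKrullDim S = 1) (hGor : IsGorensteinOfDimOne S)
    (M : Type) [AddCommGroup M] [Module S M] [Module Λ M]
    [IsScalarTower Λ S M] [Module.Finite S M] :
    List.TFAE
      [Function.Bijective (Module.Dual.eval S M),
       Function.Injective (Module.Dual.eval S M),
       Module.Free Λ M] := by
  have hStf := flat_torsion_free (S := S) Λ
  tfae_have 1 → 2 := fun h => h.injective
  tfae_have 2 → 3 := by
    intro h2
    haveI : Module.Finite Λ M := Module.Finite.trans S M
    haveI : NoZeroSMulDivisors Λ M := by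
      refine ⟨fun {c m} hcm => ?_⟩
      by_contra hne
      push_neg at hne
      obtain ⟨hc, hm⟩ := hne
      have hfex : ∃ f : Module.Dual S M, f m ≠ 0 := by
        by_contra hall
        push_neg at hall
        apply hm
        apply h2
        rw [map_zero]
        ext f
        exact hall f
      obtain ⟨f, hfm⟩ := hfex
      have hcf : c • f m = 0 := by
        have h4 : f (c • m) = 0 := by rw [hcm, map_zero]
        rwa [← algebraMap_smul S c m, map_smul, algebraMap_smul] at h4
      rcases hStf c (f m) hcf with h | h
      · exact hc h
      · exact hfm h
    exact Module.free_of_finite_type_torsion_free'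
  tfae_have 3 → 1 := by
    intro h3
    haveI := h3
    haveI : Module.IsTorsionFree Λ M := (Module.Free.chooseBasis Λ M).isTorsionFree
    constructor
    · exact eval_injective hGor Λ hStf M
        (fun c m h => smul_eq_zero.mp h)
    · exact eval_surjective hGor M
  tfae_finish
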